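/- Let α = |X|(|X|−1) and ε_n = α·ln(1 + α/(n−α)). For any n ≥ α and any PMF P on the finite set X, there exists an n-type P̄ on X (a PMF with all values integer multiples of 1/n) such that the variational distance satisfies ∑_x |P(x) − P̄(x)| ≤ 2(|X|−1)/n, and the n-fold product distributions satisfy P^n(x^n) ≤ P̄^n(x^n) · e^{α + ε_n} for all x^n ∈ X^n. -/

import Mathlib

open Finset

private lemma abs_eq_two_max (a : ℝ) : |a| = 2 * max a 0 - a := by
  rcases le_total a 0 with h | h
  · rw [abs_of_nonpos h, max_eq_right h]; ring
  · rw [abs_of_nonneg h, max_eq_left h]; ring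

theorem exists_nType_approx {X : Type*} [Fintype X] [Nonempty X]
    (n : ℕ) (hn1 : 0 < n)
    (α : ℝ) (hα : α = (Fintype.card X : ℝ) * ((Fintype.card X : ℝ) - 1))
    (hn : α ≤ n)
    (P : X → ℝ) (hP0 : ∀ x, 0 ≤ P x) (hP1 : ∑ x, P x = 1) :
    ∃ Q : X → ℝ, (∀ x, 0 ≤ Q x) ∧ (∑ x, Q x = 1) ∧
      (∀ x, ∃ m : ℕ, m ≤ n ∧ Q x = (m : ℝ) / n) ∧
      (∑ x, |P x - Q x| ≤ 2 * ((Fintype.card X : ℝ) - 1) / n) ∧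
      (∀ xs : Fin n → X, (∏ i, P (xs i)) ≤
        (∏ i, Q (xs i)) * Real.exp (α + α * Real.log (1 + α / ((n : ℝ) - α)))) := by
  classical
  set k : ℕ := Fintype.card X with hkdef
  have hk1 : 1 ≤ k := Fintype.card_pos
  have hkR : (1:ℝ) ≤ k := by exact_mod_cast hk1
  have hn0 : (0:ℝ) < n := by exact_mod_cast hn1
  have hαn : α ≤ (n:ℝ) := hn
  have hα0 : 0 ≤ α := by rw [hα]; nlinarith
  obtain ⟨x₀, hx₀⟩ : ∃ x, 0 < P x := by
    by_contra h
    push_neg at h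
    have : ∑ x, P x = 0 :=
      Finset.sum_eq_zero fun x _ => le_antisymm (h x) (hP0 x)
    rw [hP1] at this; norm_num at this
  set c : ℝ := (n:ℝ) - ((k:ℝ) - 1) with hcdef
  have hcpos : 0 < c := by
    rcases eq_or_lt_of_le hkR with h | h
    · rw [hcdef, ← h]; simpa using hn0
    · have hk2 : (2:ℝ) ≤ k := by
        have : 1 < k := by exact_mod_cast h
        exact_mod_cast this
      rw [hα] at hαn
      nlinarith
  set mfun : X → ℕ := fun x => ⌈c * P x⌉₊ with hmdef
  have hmge : ∀ x, c * P x ≤ (mfun x : ℝ) := fun x => Nat.le_ceil _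
  set s : ℕ := ∑ x, mfun x with hsdef
  have hslt : (s:ℝ) < (n:ℝ) + 1 := by
    have h1 : (s:ℝ) = ∑ x, (mfun x : ℝ) := by push_cast [hsdef]; rfl
    have h2 : ∑ x, (mfun x : ℝ) < ∑ x, (c * P x + 1) := by
      apply Finset.sum_lt_sum_of_nonempty Finset.univ_nonempty
      intro x _
      exact Nat.ceil_lt_add_one (mul_nonneg hcpos.le (hP0 x))
    have h3 : ∑ x, (c * P x + 1) = (n:ℝ) + 1 := by
      rw [Finset.sum_add_distrib, ← Finset.mul_sum, hP1, Finset.sum_const,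
        Finset.card_univ, ← hkdef]
      simp only [mul_one, nsmul_eq_mul, mul_one]
      rw [hcdef]; ring
    rw [h1]; rw [h3] at h2; exact h2
  have hsle : s ≤ n := by
    have : s < n + 1 := by exact_mod_cast hslt
    omega
  set M : X → ℕ := fun x => mfun x + if x = x₀ then n - s else 0 with hMdef
  have hMsum : ∑ x, M x = n := by
    rw [hMdef]
    simp only [Finset.sum_add_distrib, Finset.sum_ite_eq', Finset.mem_univ, if_true]
    omega
  have hMle : ∀ x, M x ≤ n := fun x =>
    hMsum ▸ Finset.single_le_sum (fun i _ => Nat.zero_le (M i)) (Finset.mem_univ x)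
  have hQge : ∀ x, c * P x / n ≤ (M x : ℝ) / n := by
    intro x
    gcongr
    calc c * P x ≤ (mfun x : ℝ) := hmge x
      _ ≤ (M x : ℝ) := by exact_mod_cast Nat.le_add_right _ _
  refine ⟨fun x => (M x : ℝ) / n, fun x => by positivity, ?_,
    fun x => ⟨M x, hMle x, rfl⟩, ?_, ?_⟩
  · rw [← Finset.sum_div,
      show ∑ x, (M x : ℝ) = ((∑ x, M x : ℕ) : ℝ) by push_cast; rfl, hMsum]
    exact div_self hn0.ne'
  · -- variational distance
    have hsumQ : ∑ x, (M x : ℝ) / n = 1 := by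
      rw [← Finset.sum_div,
        show ∑ x, (M x : ℝ) = ((∑ x, M x : ℕ) : ℝ) by push_cast; rfl, hMsum]
      exact div_self hn0.ne'
    have hmax : ∀ x, max (P x - (M x : ℝ) / n) 0 ≤ ((k:ℝ) - 1) / n * P x := by
      intro x
      apply max_le
      · have h := hQge x
        have : P x - (M x : ℝ) / n ≤ P x - c * P x / n := by linarith
        calc P x - (M x : ℝ) / n ≤ P x - c * P x / n := this
          _ = ((k:ℝ) - 1) / n * P x := by rw [hcdef]; field_simp; ring
      · have h9 : 0 ≤ (k:ℝ) - 1 := by linarith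
        exact mul_nonneg (div_nonneg h9 hn0.le) (hP0 x)
    calc ∑ x, |P x - (M x : ℝ) / n|
        = ∑ x, (2 * max (P x - (M x : ℝ) / n) 0 - (P x - (M x : ℝ) / n)) := by
          exact Finset.sum_congr rfl fun x _ => abs_eq_two_max _
      _ = 2 * ∑ x, max (P x - (M x : ℝ) / n) 0
            - (∑ x, P x - ∑ x, (M x : ℝ) / n) := by
          rw [Finset.sum_sub_distrib, ← Finset.mul_sum, Finset.sum_sub_distrib]
      _ = 2 * ∑ x, max (P x - (M x : ℝ) / n) 0 := by rw [hP1, hsumQ]; ring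
      _ ≤ 2 * ∑ x, ((k:ℝ) - 1) / n * P x := by
          have := Finset.sum_le_sum fun x (_ : x ∈ Finset.univ) => hmax x
          linarith
      _ = 2 * ((k:ℝ) - 1) / n := by
          rw [← Finset.mul_sum, hP1]; ring
  · -- product bound
    intro xs
    have hPQ : ∀ i : Fin n, P (xs i) ≤ ((n:ℝ) / c) * ((M (xs i) : ℝ) / n) := by
      intro i
      have h := hQge (xs i)
      calc P (xs i) = ((n:ℝ) / c) * (c * P (xs i) / n) := by
            field_simp
        _ ≤ ((n:ℝ) / c) * ((M (xs i) : ℝ) / n) := by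
            apply mul_le_mul_of_nonneg_left h (by positivity)
    have hprod : (∏ i, P (xs i)) ≤ ∏ i, (((n:ℝ) / c) * ((M (xs i) : ℝ) / n)) :=
      Finset.prod_le_prod (fun i _ => hP0 _) (fun i _ => hPQ i)
    have hsplit : ∏ i, (((n:ℝ) / c) * ((M (xs i) : ℝ) / n))
        = ((n:ℝ) / c) ^ n * ∏ i, ((M (xs i) : ℝ) / n) := by
      rw [Finset.prod_mul_distrib, Finset.prod_const, Finset.card_univ,
        Fintype.card_fin]
    -- (n/c)^n ≤ exp α
    have hlog : Real.log ((n:ℝ) / c) ≤ ((n:ℝ) - c) / c := by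
      have := Real.log_le_sub_one_of_pos (div_pos hn0 hcpos)
      calc Real.log ((n:ℝ) / c) ≤ (n:ℝ) / c - 1 := this
        _ = ((n:ℝ) - c) / c := by field_simp
    have hkey : (n:ℝ) * (((n:ℝ) - c) / c) ≤ α := by
      rw [hα] at hαn ⊢
      rw [mul_div_assoc', div_le_iff₀ hcpos, hcdef]
      rcases eq_or_lt_of_le hkR with h | h
      · rw [← h]; ring_nf; nlinarith
      · have hk2 : (2:ℝ) ≤ k := by
          have : 1 < k := by exact_mod_cast h
          exact_mod_cast this
        have hnk : (k:ℝ) ≤ n := by nlinarith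
        nlinarith [mul_nonneg (mul_nonneg (sub_nonneg.2 hkR) (sub_nonneg.2 hkR))
          (sub_nonneg.2 hnk)]
    have hpow : ((n:ℝ) / c) ^ n ≤ Real.exp α := by
      have h1 : ((n:ℝ) / c) ^ n = Real.exp ((n:ℝ) * Real.log ((n:ℝ) / c)) := by
        rw [Real.exp_nat_mul, Real.exp_log (div_pos hn0 hcpos)]
      rw [h1]
      apply Real.exp_le_exp.2
      calc (n:ℝ) * Real.log ((n:ℝ) / c) ≤ (n:ℝ) * (((n:ℝ) - c) / c) := by
            apply mul_le_mul_of_nonneg_left hlog hn0.le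
        _ ≤ α := hkey
    have hε : 0 ≤ α * Real.log (1 + α / ((n:ℝ) - α)) := by
      apply mul_nonneg hα0
      apply Real.log_nonneg
      have : 0 ≤ α / ((n:ℝ) - α) := div_nonneg hα0 (by linarith)
      linarith
    have hQprod : 0 ≤ ∏ i, ((M (xs i) : ℝ) / n) :=
      Finset.prod_nonneg fun i _ => by positivity
    calc (∏ i, P (xs i)) ≤ ((n:ℝ) / c) ^ n * ∏ i, ((M (xs i) : ℝ) / n) := by
          rw [← hsplit]; exact hprod
      _ ≤ Real.exp (α + α * Real.log (1 + α / ((n:ℝ) - α)))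
            * ∏ i, ((M (xs i) : ℝ) / n) := by
          apply mul_le_mul_of_nonneg_right ?_ hQprod
          calc ((n:ℝ) / c) ^ n ≤ Real.exp α := hpow
            _ ≤ Real.exp (α + α * Real.log (1 + α / ((n:ℝ) - α))) := by
                apply Real.exp_le_exp.2; linarith
      _ = (∏ i, ((M (xs i) : ℝ) / n))
            * Real.exp (α + α * Real.log (1 + α / ((n:ℝ) - α))) := mul_comm _ _
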